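/- For k ≥ 0 and n ≥ k + 1, the n-th term of the Catalan transform of the k-shifted Catalan sequence (a_m = C_{m−k} for m ≥ k, a_m = 0 for m < k) equals the number of sequences (u_1, ..., u_{n−k}) with 1 ≤ u_i ≤ n satisfying condition (1); moreover b_n = 0 for n ≤ k−1 and b_k = 1. -/

import Mathlib

def gc (n k : ℕ) : ℚ := ((k : ℚ) + 1) / (2 * (n : ℚ) + (k : ℚ) + 1) * ((2 * n + k + 1).choose n : ℚ)

def cat (n : ℕ) : ℚ := 1 / ((n : ℚ) + 1) * ((2 * n).choose n : ℚ)

lemma cat_cast (q : ℕ) : (catalan q : ℚ) = cat q := by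
  have h : (q+1) * catalan q = (2*q).choose q := succ_mul_catalan_eq_centralBinom q
  have h2 : ((q:ℚ)+1) * (catalan q : ℚ) = ((2*q).choose q : ℚ) := by exact_mod_cast congrArg (Nat.cast : ℕ → ℚ) h
  rw [cat]
  have hq : ((q:ℚ)+1) ≠ 0 := by positivity
  field_simp
  linarith [h2]

lemma gc_zero (k : ℕ) : gc 0 k = 1 := by
  simp [gc]
  exact (by positivity : (k:ℚ)+1 ≠ 0)

lemma choose_fact (a b : ℕ) : ((a+b).choose a : ℚ) = ((a+b).factorial : ℚ) / ((a.factorial : ℚ) * (b.factorial : ℚ)) := by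
  rw [Nat.cast_choose ℚ (by omega : a ≤ a + b)]
  have e : a + b - a = b := by omega
  rw [e]

lemma gc_fact (n k : ℕ) : gc n k = ((k : ℚ) + 1) / (2 * (n : ℚ) + (k : ℚ) + 1) *
    (((2*n+k+1).factorial : ℚ) / ((n.factorial : ℚ) * ((n+k+1).factorial : ℚ))) := by
  rw [gc]
  congr 1
  have : 2*n+k+1 = n + (n+k+1) := by omega
  rw [this, choose_fact]

lemma cat_fact (n : ℕ) : cat n = 1 / ((n : ℚ) + 1) * (((2*n).factorial : ℚ) / ((n.factorial : ℚ) * (n.factorial : ℚ))) := by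
  rw [cat]
  congr 1
  have : 2*n = n + n := by omega
  rw [this, choose_fact]

lemma gc_catalan (m : ℕ) : gc m 0 = cat m := by
  rw [gc_fact, cat_fact]
  have h1 : (2*m+0+1).factorial = (2*m+1) * (2*m).factorial := by
    rw [← Nat.factorial_succ]
  have h2 : (m+0+1).factorial = (m+1) * m.factorial := by
    rw [← Nat.factorial_succ]
  rw [h1, h2]
  push_cast
  have h3 : ((2*m).factorial : ℚ) ≠ 0 := by positivity
  have h4 : (m.factorial : ℚ) ≠ 0 := by positivity
  have h5 : (2*(m:ℚ)+1) ≠ 0 := by positivity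
  have h6 : ((m:ℚ)+1) ≠ 0 := by positivity
  field_simp [Nat.cast_ne_zero, Nat.factorial_ne_zero]
  ring

lemma gc_one (m : ℕ) : gc m 1 = gc (m+1) 0 := by
  rw [gc_fact, gc_fact]
  have e1 : 2*m+1+1 = 2*m+2 := by omega
  have e2 : m+1+1 = m+2 := by omega
  have e3 : 2*(m+1)+0+1 = 2*m+3 := by omega
  have e4 : (m+1)+0+1 = m+2 := by omega
  rw [e1, e2, e3, e4]
  have h1 : (2*m+3).factorial = (2*m+3) * (2*m+2).factorial := by
    rw [← Nat.factorial_succ]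
  have h2 : (m+1).factorial = (m+1) * m.factorial := by
    rw [← Nat.factorial_succ]
  rw [h1, h2]
  push_cast
  have hm : (m.factorial : ℚ) ≠ 0 := by positivity
  have : ((2*m+2).factorial : ℚ) ≠ 0 := by positivity
  have : ((m+2).factorial : ℚ) ≠ 0 := by positivity
  field_simp
  ring

lemma gc_pascal (m c : ℕ) : gc (m+1) (c+1) = gc (m+1) c + gc m (c+2) := by
  rw [gc_fact, gc_fact, gc_fact]
  have e1 : 2*(m+1)+(c+1)+1 = 2*m+c+4 := by omega
  have e2 : (m+1)+(c+1)+1 = m+c+3 := by omega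
  have e3 : 2*(m+1)+c+1 = 2*m+c+3 := by omega
  have e4 : (m+1)+c+1 = m+c+2 := by omega
  have e5 : 2*m+(c+2)+1 = 2*m+c+3 := by omega
  have e6 : m+(c+2)+1 = m+c+3 := by omega
  rw [e1, e2, e3, e4, e5, e6]
  have h1 : (2*m+c+4).factorial = (2*m+c+4) * (2*m+c+3).factorial := by
    rw [← Nat.factorial_succ]
  have h2 : (m+c+3).factorial = (m+c+3) * (m+c+2).factorial := by
    rw [← Nat.factorial_succ]
  have h3 : (m+1).factorial = (m+1) * m.factorial := by
    rw [← Nat.factorial_succ]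
  rw [h1, h2, h3]
  push_cast
  have hm : (m.factorial : ℚ) ≠ 0 := by positivity
  have : ((2*m+c+3).factorial : ℚ) ≠ 0 := by positivity
  have : ((m+c+2).factorial : ℚ) ≠ 0 := by positivity
  have : (2*(m:ℚ)+c+3) ≠ 0 := by positivity
  have : (2*(m:ℚ)+c+4) ≠ 0 := by positivity
  have : ((m:ℚ)+c+3) ≠ 0 := by positivity
  have : ((m:ℚ)+1) ≠ 0 := by positivity
  field_simp
  ring

open Finset in
lemma cat_rec (q : ℕ) : cat (q+1) = ∑ i ∈ range (q+1), cat i * cat (q-i) := by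
  have h := catalan_succ' q
  have : ((catalan (q+1) : ℚ)) = ∑ ij ∈ Finset.HasAntidiagonal.antidiagonal q, (catalan ij.1 : ℚ) * (catalan ij.2 : ℚ) := by
    exact_mod_cast congrArg (Nat.cast : ℕ → ℚ) h
  rw [cat_cast] at this
  rw [this, Finset.Nat.sum_antidiagonal_eq_sum_range_succ (f := fun a b => (catalan a : ℚ) * (catalan b : ℚ))]
  apply Finset.sum_congr rfl
  intro i _
  rw [cat_cast, cat_cast]

open Finset in
lemma star2 : ∀ r : ℕ, ∀ c : ℕ, gc r (c+1) = ∑ a ∈ range (r+1), cat a * gc (r-a) c := by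
  intro r
  induction r using Nat.strong_induction_on with
  | _ r ih =>
    intro c
    match r with
    | 0 =>
      simp [gc_zero, cat]
    | (r+1) =>
      rw [Finset.sum_range_succ' (f := fun a => cat a * gc (r+1-a) c)]
      have e0 : (r+1-0) = r+1 := rfl
      have key : ∑ b ∈ range (r+1), cat (b+1) * gc (r-b) c = gc r (c+2) := by
        have step1 : ∀ b ∈ range (r+1), cat (b+1) * gc (r-b) c
            = ∑ i ∈ range (r+1), (if i ≤ b then cat i * cat (b-i) * gc (r-b) c else 0) := by
          intro b hb
          simp only [mem_range] at hb
          rw [Finset.sum_ite, Finset.sum_const_zero, add_zero]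
          have hf : Finset.filter (fun i => i ≤ b) (range (r+1)) = range (b+1) := by
            ext x; simp [Finset.mem_filter, Finset.mem_range]; omega
          rw [hf, cat_rec b, Finset.sum_mul]
        rw [Finset.sum_congr rfl step1, Finset.sum_comm]
        have step2 : ∀ i ∈ range (r+1),
            (∑ b ∈ range (r+1), if i ≤ b then cat i * cat (b-i) * gc (r-b) c else 0)
            = cat i * gc (r-i) (c+1) := by
          intro i hi
          simp only [mem_range] at hi
          rw [Finset.sum_ite, Finset.sum_const_zero, add_zero]
          have hf : Finset.filter (fun b => i ≤ b) (range (r+1)) = Finset.Ico i (r+1) := by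
            ext x; simp [Finset.mem_filter, Finset.mem_range, Finset.mem_Ico]; omega
          rw [hf, Finset.sum_Ico_eq_sum_range]
          have hr : ∀ d ∈ range (r+1-i), cat i * cat ((i+d)-i) * gc (r-(i+d)) c = cat i * (cat d * gc ((r-i)-d) c) := by
            intro d _
            have e1 : (i+d)-i = d := by omega
            have e2 : r-(i+d) = (r-i)-d := by omega
            rw [e1, e2]; ring
          rw [Finset.sum_congr rfl hr, ← Finset.mul_sum]
          congr 1
          have e3 : r+1-i = (r-i)+1 := by omega
          rw [e3, ← ih (r-i) (by omega) c]
        rw [Finset.sum_congr rfl step2]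
        rw [← ih r (by omega) (c+1)]
      simp only [Nat.succ_sub_succ_eq_sub]
      rw [key, e0]
      have : cat 0 * gc (r+1) c = gc (r+1) c := by
        simp [cat]
      rw [this, gc_pascal r c, add_comm]


open Finset in
lemma L2 (m : ℕ) : ∀ c : ℕ, ∑ s ∈ range (c+1), gc m (s+1) = gc (m+1) c := by
  intro c
  induction c with
  | zero => simp [gc_one]
  | succ c ih =>
    rw [Finset.sum_range_succ, ih, show c+1+1 = c+2 from rfl, gc_pascal m c, add_comm]

def Dnum (n : ℕ) : ℕ → ℕ → ℕ
  | 0, _ => 1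
  | (m+1), c => ∑ t ∈ Finset.range (min n (c+m+1)),
      if t + 1 ≤ m+1 then Dnum n (m - t) c * catalan t
      else Dnum n m (t - m)
  termination_by m => m
  decreasing_by
  · omega
  · omega

open Finset in
lemma Dnum_unsat : ∀ m c n : ℕ, m + c ≤ n → (Dnum n m c : ℚ) = gc m c := by
  intro m
  induction m using Nat.strong_induction_on with
  | _ m ih =>
    intro c n h
    match m with
    | 0 => rw [gc_zero]; simp [Dnum]
    | (m+1) =>
      rw [Dnum]
      have hmin : min n (c+m+1) = c+m+1 := by omega
      rw [hmin, Nat.cast_sum]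
      rw [← Finset.sum_range_add_sum_Ico _ (by omega : m+1 ≤ c+m+1)]
      have part1 : ∑ t ∈ range (m+1),
          ((if t + 1 ≤ m+1 then Dnum n (m - t) c * catalan t else Dnum n m (t - m) : ℕ) : ℚ)
          = gc m (c+1) := by
        rw [star2 m c]
        apply Finset.sum_congr rfl
        intro t ht
        simp only [mem_range] at ht
        rw [if_pos (by omega)]
        push_cast
        rw [ih (m-t) (by omega) c n (by omega), cat_cast]
        ring
      have part2 : ∑ t ∈ Finset.Ico (m+1) (c+m+1),
          ((if t + 1 ≤ m+1 then Dnum n (m - t) c * catalan t else Dnum n m (t - m) : ℕ) : ℚ)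
          = ∑ d ∈ range c, gc m (d+1) := by
        rw [Finset.sum_Ico_eq_sum_range]
        have e : c+m+1-(m+1) = c := by omega
        rw [e]
        apply Finset.sum_congr rfl
        intro d hd
        simp only [mem_range] at hd
        rw [if_neg (by omega)]
        have e2 : m+1+d-m = d+1 := by omega
        rw [e2, ih m (by omega) (d+1) n (by omega)]
      rw [part1, part2]
      match c with
      | 0 => simpa [gc_one] using (gc_one m).symm
      | (c+1) =>
        rw [L2 m c, gc_pascal m c, add_comm]

def Cond {n : ℕ} (u : Fin n → ℕ) : Prop :=
  ∀ i j : Fin n, i < j →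
    ¬(1 ≤ (u j : ℤ) - (((j : ℕ) : ℤ) - ((i : ℕ) : ℤ)) ∧
      (u j : ℤ) - (((j : ℕ) : ℤ) - ((i : ℕ) : ℤ)) ≤ (u i : ℤ) - 1)

def ct (a : ℕ → ℚ) (n : ℕ) : ℚ :=
  if n = 0 then a 0
  else ∑ j ∈ Finset.range (n + 1),
    (j : ℚ) / ((2 * n - j : ℕ) : ℚ) * ((2 * n - j).choose (n - j) : ℚ) * a j

lemma ct_lt (k m : ℕ) (h : m + 1 ≤ k) :
    ct (fun m => if m < k then 0 else cat (m - k)) m = 0 := by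
  rw [ct]
  by_cases hm : m = 0
  · simp [hm]
    intro h'
    omega
  · rw [if_neg hm]
    apply Finset.sum_eq_zero
    intro j hj
    simp only [Finset.mem_range] at hj
    rw [if_pos (by omega)]
    ring

lemma ct_self (k : ℕ) : ct (fun m => if m < k then 0 else cat (m - k)) k = 1 := by
  rw [ct]
  by_cases hk : k = 0
  · subst hk
    simp [cat]
  · rw [if_neg hk]
    rw [Finset.sum_eq_single k]
    · rw [if_neg (by omega)]
      have e1 : 2*k - k = k := by omega
      have e2 : k - k = 0 := by omega
      rw [e1, e2, Nat.choose_zero_right]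
      have : cat 0 = 1 := by simp [cat]
      rw [this]
      have hk' : (k:ℚ) ≠ 0 := by exact_mod_cast hk
      field_simp; norm_num
    · intro j hj hne
      simp only [Finset.mem_range] at hj
      by_cases hlt : j < k
      · rw [if_pos hlt]; ring
      · omega
    · intro h; exact absurd (Finset.self_mem_range_succ k) h

open Finset in
lemma Dnum_sat : ∀ m : ℕ, ∀ k n : ℕ, n = m + k → 1 ≤ m →
    (Dnum n m n : ℚ) = ct (fun j => if j < k then 0 else cat (j - k)) n := by
  intro m
  induction m using Nat.strong_induction_on with
  | _ m ih =>
    intro k n hn hm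
    match m, hm with
    | (mm+1), _ =>
      have hn0 : n ≠ 0 := by omega
      rw [Dnum]
      have hmin : min n (n+mm+1) = n := by omega
      rw [hmin, Nat.cast_sum]
      rw [← Finset.sum_range_add_sum_Ico _ (by omega : mm+1 ≤ n)]
      -- first part
      have part1 : ∑ t ∈ range (mm+1),
          ((if t + 1 ≤ mm+1 then Dnum n (mm - t) n * catalan t else Dnum n mm (t - mm) : ℕ) : ℚ)
          = ∑ t ∈ range (mm+1), cat t * ct (fun j => if j < k+t+1 then 0 else cat (j - (k+t+1))) n := by
        apply Finset.sum_congr rfl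
        intro t ht
        simp only [mem_range] at ht
        rw [if_pos (by omega)]
        push_cast [cat_cast]
        by_cases htm : t = mm
        · subst htm
          rw [Nat.sub_self]
          have hD : (Dnum n 0 n : ℚ) = 1 := by simp [Dnum]
          have e : n = k + t + 1 := by omega
          rw [hD, e, ct_self (k+t+1)]
          ring
        · rw [ih (mm-t) (by omega) (k+t+1) n (by omega) (by omega)]
          ring
      have alpha : ∑ t ∈ range (mm+1), cat t * ct (fun j => if j < k+t+1 then 0 else cat (j - (k+t+1))) n
          = ∑ j ∈ range (n+1), (j : ℚ) / ((2*n - j : ℕ) : ℚ) * ((2*n - j).choose (n - j) : ℚ) * (if j < k+1 then 0 else cat (j - k)) := by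
        have expand : ∀ t ∈ range (mm+1), cat t * ct (fun j => if j < k+t+1 then 0 else cat (j-(k+t+1))) n
            = ∑ j ∈ range (n+1), (j:ℚ)/((2*n-j:ℕ):ℚ) * ((2*n-j).choose (n-j):ℚ) * (if j < k+t+1 then 0 else cat t * cat (j-(k+t+1))) := by
          intro t _
          rw [ct, if_neg hn0, Finset.mul_sum]
          apply Finset.sum_congr rfl
          intro j _
          by_cases hj : j < k+t+1
          · rw [if_pos hj, if_pos hj]; ring
          · rw [if_neg hj, if_neg hj]; ring
        rw [Finset.sum_congr rfl expand, Finset.sum_comm]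
        apply Finset.sum_congr rfl
        intro j hj
        simp only [mem_range] at hj
        by_cases hjk : j < k+1
        · rw [if_pos hjk, mul_zero]
          apply Finset.sum_eq_zero
          intro t _
          rw [if_pos (by omega), mul_zero]
        · rw [if_neg hjk]
          have step : ∀ t ∈ range (mm+1), (j:ℚ)/((2*n-j:ℕ):ℚ) * ((2*n-j).choose (n-j):ℚ) * (if j < k+t+1 then 0 else cat t * cat (j-(k+t+1)))
              = (j:ℚ)/((2*n-j:ℕ):ℚ) * ((2*n-j).choose (n-j):ℚ) * (if t < j - k then cat t * cat ((j-k-1) - t) else 0) := by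
            intro t _
            congr 1
            by_cases h1 : j < k+t+1
            · rw [if_pos h1, if_neg (by omega)]
            · rw [if_neg h1, if_pos (by omega)]
              congr 2
              omega
          rw [Finset.sum_congr rfl step, ← Finset.mul_sum]
          congr 1
          rw [Finset.sum_ite, Finset.sum_const_zero, add_zero]
          have hf : Finset.filter (fun t => t < j - k) (range (mm+1)) = range (j-k) := by
            ext x; simp [Finset.mem_filter, Finset.mem_range]; omega
          rw [hf]
          have hcr := cat_rec (j-k-1)
          have e : (j-k-1)+1 = j-k := by omega
          rw [e] at hcr
          rw [hcr]
      have part2 : ∑ t ∈ Finset.Ico (mm+1) n,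
          ((if t + 1 ≤ mm+1 then Dnum n (mm - t) n * catalan t else Dnum n mm (t - mm) : ℕ) : ℚ)
          = ∑ d ∈ range k, gc mm (d+1) := by
        rw [Finset.sum_Ico_eq_sum_range]
        have e : n - (mm+1) = k := by omega
        rw [e]
        apply Finset.sum_congr rfl
        intro d hd
        simp only [mem_range] at hd
        rw [if_neg (by omega)]
        have e2 : mm+1+d-mm = d+1 := by omega
        rw [e2, Dnum_unsat mm (d+1) n (by omega)]
      rw [part1, alpha, part2]
      rw [ct, if_neg hn0]
      have split : ∀ j ∈ range (n+1),
          (j:ℚ)/((2*n-j:ℕ):ℚ) * ((2*n-j).choose (n-j):ℚ) * (if j < k then 0 else cat (j-k))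
          = (j:ℚ)/((2*n-j:ℕ):ℚ) * ((2*n-j).choose (n-j):ℚ) * (if j < k+1 then 0 else cat (j-k))
            + (if j = k then (k:ℚ)/((2*n-k:ℕ):ℚ) * ((2*n-k).choose (n-k):ℚ) else 0) := by
        intro j hj
        rcases lt_trichotomy j k with h | h | h
        · rw [if_pos h, if_pos (by omega), if_neg (by omega)]; ring
        · subst h
          rw [if_neg (by omega), if_pos (by omega), if_pos rfl, Nat.sub_self]
          have : cat 0 = 1 := by simp [cat]
          rw [this]; ring
        · rw [if_neg (by omega), if_neg (by omega), if_neg (by omega)]; ring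
      rw [Finset.sum_congr rfl split, Finset.sum_add_distrib, Finset.sum_ite_eq' (range (n+1)) k]
      rw [if_pos (by simp only [mem_range]; omega)]
      congr 1
      by_cases hk : k = 0
      · subst hk
        simp
      · have hL2 : ∑ d ∈ range k, gc mm (d+1) = gc (mm+1) (k-1) := by
          have h := L2 mm (k-1)
          have e : (k-1)+1 = k := by omega
          rw [e] at h
          exact h
        rw [hL2, gc]
        have e1 : 2*(mm+1)+(k-1)+1 = 2*n-k := by omega
        have e2 : mm+1 = n-k := by omega
        rw [e1, e2]
        have e3 : (((k-1):ℕ):ℚ) = (k:ℚ) - 1 := by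
          rw [Nat.cast_sub (by omega)]; simp
        have e4 : ((n-k : ℕ):ℚ) = (n:ℚ) - k := by
          rw [Nat.cast_sub (by omega)]
        have e5 : ((2*n-k : ℕ):ℚ) = 2*(n:ℚ) - k := by
          rw [Nat.cast_sub (by omega)]; push_cast; ring
        rw [e3, e4, e5]
        have e6 : (k:ℚ) - 1 + 1 = k := by ring
        have e7 : 2*((n:ℚ)-k) + ((k:ℚ)-1) + 1 = 2*(n:ℚ)-k := by ring
        rw [e6, e7]


lemma cond_iff {M : ℕ} (u : Fin M → ℕ) :
    Cond u ↔ ∀ i j : Fin M, i < j → (u j + (i:ℕ) ≤ (j:ℕ) ∨ u i + (j:ℕ) ≤ u j + (i:ℕ)) := by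
  unfold Cond
  constructor
  · intro h i j hij
    have := h i j hij
    omega
  · intro h i j hij
    have := h i j hij
    omega

noncomputable instance CondDec {m : ℕ} : DecidablePred (@Cond m) := fun _ => Classical.dec _

noncomputable def Fs (n m c : ℕ) : Finset (Fin m → ℕ) :=
  (Fintype.piFinset fun i : Fin m => Finset.Icc 1 (min n (c + (i:ℕ) + 1))).filter
    (fun u => Cond u)

lemma mem_Fs {n m c : ℕ} {u : Fin m → ℕ} :
    u ∈ Fs n m c ↔ (∀ i : Fin m, 1 ≤ u i ∧ u i ≤ min n (c + (i:ℕ) + 1)) ∧ Cond u := by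
  rw [Fs, Finset.mem_filter, Fintype.mem_piFinset]
  simp only [Finset.mem_Icc]

lemma Fs_zero (n c : ℕ) : (Fs n 0 c).card = 1 := by
  rw [Fs]
  rw [Finset.card_eq_one]
  refine ⟨(fun i => 1), ?_⟩
  ext u
  simp only [Finset.mem_filter, Fintype.mem_piFinset, Finset.mem_singleton]
  constructor
  · intro _
    funext i
    exact absurd i.2 (by omega)
  · intro h
    subst h
    refine ⟨fun i => absurd i.2 (by omega), fun i j _ => absurd j.2 (by omega)⟩

open Finset in
lemma fiberB (n m c t : ℕ) (ht : t < min n (c+m+1)) (htm : m + 1 ≤ t) :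
    ((Fs n (m+1) c).filter (fun u => u (Fin.last m) = t+1)).card = (Fs n m (t-m)).card := by
  apply Finset.card_nbij' (i := fun u => u ∘ Fin.castSucc) (j := fun v => Fin.snoc v (t+1))
  · intro u hu
    rw [Finset.mem_coe, Finset.mem_filter, mem_Fs] at hu
    obtain ⟨⟨hcap, hcond⟩, hlast⟩ := hu
    rw [cond_iff] at hcond
    rw [Finset.mem_coe, mem_Fs]
    constructor
    · intro p
      have h1 := hcap p.castSucc
      have h2 := hcond p.castSucc (Fin.last m) (Fin.castSucc_lt_last p)
      simp only [Fin.coe_castSucc, Fin.val_last] at h1 h2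
      simp only [Function.comp_apply, Fin.coe_castSucc]
      omega
    · rw [cond_iff]
      intro p q hpq
      have := hcond p.castSucc q.castSucc (by simpa using hpq)
      simpa using this
  · intro v hv
    rw [Finset.mem_coe, mem_Fs] at hv
    obtain ⟨hcap, hcond⟩ := hv
    rw [cond_iff] at hcond
    rw [Finset.mem_coe, Finset.mem_filter, mem_Fs]
    refine ⟨⟨?_, ?_⟩, by simp⟩
    · intro p
      induction p using Fin.lastCases with
      | last =>
        simp only [Fin.snoc_last, Fin.val_last]
        omega
      | cast i =>
        have h1 := hcap i
        simp only [Fin.snoc_castSucc, Fin.coe_castSucc]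
        omega
    · rw [cond_iff]
      intro p q hpq
      induction q using Fin.lastCases with
      | last =>
        induction p using Fin.lastCases with
        | last => exact absurd hpq (lt_irrefl _)
        | cast i =>
          have h1 := hcap i
          simp only [Fin.snoc_last, Fin.snoc_castSucc, Fin.coe_castSucc, Fin.val_last]
          omega
      | cast qq =>
        induction p using Fin.lastCases with
        | last => exact absurd (lt_trans hpq (Fin.castSucc_lt_last qq)) (lt_irrefl _)
        | cast pp =>
          have := hcond pp qq (by simpa using hpq)
          simpa using this
  · intro u hu
    rw [Finset.mem_coe, Finset.mem_filter] at hu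
    funext p
    induction p using Fin.lastCases with
    | last => simp [hu.2]
    | cast i => simp
  · intro v _
    funext i
    simp

set_option maxHeartbeats 2000000 in
open Finset in
lemma fiberA (n m c t : ℕ) (ht : t < min n (c+m+1)) (htm : t ≤ m) :
    ((Fs n (m+1) c).filter (fun u => u (Fin.last m) = t+1)).card
      = (Fs n (m-t) c).card * (Fs n t 0).card := by
  rw [← Finset.card_product]
  apply Finset.card_nbij'
    (i := fun u => (fun i : Fin (m-t) => u ⟨i, by have := i.isLt; omega⟩,
                    fun r : Fin t => u ⟨m-t+(r:ℕ), by have := r.isLt; omega⟩))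
    (j := fun vw => fun p : Fin (m+1) =>
      if h : (p:ℕ) < m-t then vw.1 ⟨p, h⟩
      else if h2 : (p:ℕ) < m then vw.2 ⟨(p:ℕ)-(m-t), by omega⟩ else t+1)
  · intro u hu
    rw [Finset.mem_coe, Finset.mem_filter, mem_Fs] at hu
    obtain ⟨⟨hcap, hcond⟩, hlast⟩ := hu
    rw [cond_iff] at hcond
    rw [Finset.mem_coe, Finset.mem_product, mem_Fs, mem_Fs]
    refine ⟨⟨?_, ?_⟩, ?_, ?_⟩
    · intro i
      exact hcap ⟨i, by have := i.isLt; omega⟩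
    · rw [cond_iff]
      intro i j hij
      have := hcond ⟨i, by have := i.isLt; omega⟩ ⟨j, by have := j.isLt; omega⟩
        (by simp only [Fin.mk_lt_mk]; exact hij)
      simpa using this
    · intro r
      have hr := r.isLt
      have h1 := hcap ⟨m-t+(r:ℕ), by omega⟩
      have h2 := hcond ⟨m-t+(r:ℕ), by omega⟩ (Fin.last m) (by simp only [Fin.lt_def, Fin.val_last]; omega)
      simp only [Fin.val_last] at h2
      simp only [Fin.val_mk] at h1 h2 ⊢
      omega
    · rw [cond_iff]
      intro r s hrs
      have hs := s.isLt
      have hr := r.isLt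
      have hrs' : (r:ℕ) < (s:ℕ) := hrs
      have := hcond ⟨m-t+(r:ℕ), by omega⟩ ⟨m-t+(s:ℕ), by omega⟩
        (by simp only [Fin.mk_lt_mk]; omega)
      simp only [Fin.val_mk] at this ⊢
      omega
  · intro vw hvw
    rw [Finset.mem_coe, Finset.mem_product, mem_Fs, mem_Fs] at hvw
    obtain ⟨⟨hcapv, hcondv⟩, hcapw, hcondw⟩ := hvw
    rw [cond_iff] at hcondv hcondw
    rw [Finset.mem_coe, Finset.mem_filter, mem_Fs]; beta_reduce
    have hmin : t + 1 ≤ min n (c+m+1) := ht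
    refine ⟨⟨?_, ?_⟩, ?_⟩
    · intro p
      have hp := p.isLt
      by_cases h : (p:ℕ) < m-t
      · rw [dif_pos h]
        exact hcapv ⟨p, h⟩
      · rw [dif_neg h]
        by_cases h2 : (p:ℕ) < m
        · rw [dif_pos h2]
          have := hcapw ⟨(p:ℕ)-(m-t), by omega⟩
          simp only at this ⊢
          omega
        · rw [dif_neg h2]
          omega
    · rw [cond_iff]
      intro p q hpq
      have hp := p.isLt
      have hq := q.isLt
      have hpq' : (p:ℕ) < (q:ℕ) := hpq
      by_cases hq1 : (q:ℕ) < m-t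
      · rw [dif_pos hq1, dif_pos (by omega : (p:ℕ) < m-t)]
        have := hcondv ⟨p, by omega⟩ ⟨q, hq1⟩ (by simp only [Fin.mk_lt_mk]; omega)
        simpa using this
      · rw [dif_neg hq1]
        by_cases hq2 : (q:ℕ) < m
        · rw [dif_pos hq2]
          by_cases hp1 : (p:ℕ) < m-t
          · rw [dif_pos hp1]
            have := hcapw ⟨(q:ℕ)-(m-t), by omega⟩
            simp only at this ⊢
            omega
          · rw [dif_neg hp1, dif_pos (by omega : (p:ℕ) < m)]
            have := hcondw ⟨(p:ℕ)-(m-t), by omega⟩ ⟨(q:ℕ)-(m-t), by omega⟩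
              (by simp only [Fin.mk_lt_mk]; omega)
            simp only at this ⊢
            omega
        · rw [dif_neg hq2]
          by_cases hp1 : (p:ℕ) < m-t
          · rw [dif_pos hp1]
            omega
          · rw [dif_neg hp1, dif_pos (by omega : (p:ℕ) < m)]
            have := hcapw ⟨(p:ℕ)-(m-t), by omega⟩
            simp only at this ⊢
            omega
    · simp only [Fin.val_last]
      rw [dif_neg (by omega), dif_neg (by omega)]
  · intro u hu
    rw [Finset.mem_coe, Finset.mem_filter] at hu
    funext p; beta_reduce
    have hp := p.isLt
    by_cases h : (p:ℕ) < m-t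
    · rw [dif_pos h]
    · rw [dif_neg h]
      by_cases h2 : (p:ℕ) < m
      · rw [dif_pos h2]
        show u ⟨m-t+((p:ℕ)-(m-t)), by omega⟩ = u p
        congr 1
        exact Fin.ext (by show m-t+((p:ℕ)-(m-t)) = (p:ℕ); omega)
      · rw [dif_neg h2]
        have : p = Fin.last m := Fin.ext (by simp only [Fin.val_last]; omega)
        rw [this, hu.2]
  · intro vw hvw
    obtain ⟨v, w⟩ := vw
    simp only [Prod.mk.injEq]
    constructor
    · funext i
      have hi := i.isLt
      rw [dif_pos (by simpa using hi)]
    · funext r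
      have hr := r.isLt
      rw [dif_neg (by omega), dif_pos (show (m:ℕ)-t+(r:ℕ) < m by omega)]
      show w ⟨m-t+(r:ℕ)-(m-t), by omega⟩ = w r
      congr 1
      exact Fin.ext (by show m-t+(r:ℕ)-(m-t) = (r:ℕ); omega)

open Finset in
lemma card_rec (n m c : ℕ) :
    (Fs n (m+1) c).card = ∑ t ∈ range (min n (c+m+1)),
      if t + 1 ≤ m + 1 then (Fs n (m-t) c).card * (Fs n t 0).card
      else (Fs n m (t-m)).card := by
  classical
  rw [Finset.card_eq_sum_card_fiberwise (f := fun u => u (Fin.last m) - 1)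
    (t := range (min n (c+m+1))) ?_]
  · apply Finset.sum_congr rfl
    intro t ht
    simp only [mem_range] at ht
    have hfib : (Fs n (m+1) c).filter (fun u => u (Fin.last m) - 1 = t)
        = (Fs n (m+1) c).filter (fun u => u (Fin.last m) = t+1) := by
      apply Finset.filter_congr
      intro u hu
      rw [mem_Fs] at hu
      have := (hu.1 (Fin.last m)).1
      constructor
      · intro h; omega
      · intro h; omega
    rw [hfib]
    by_cases htm : t+1 ≤ m+1
    · rw [if_pos htm, fiberA n m c t (by omega) (by omega)]
    · rw [if_neg htm, fiberB n m c t (by omega) (by omega)]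
  · intro u hu
    rw [Finset.mem_coe, mem_Fs] at hu
    have := hu.1 (Fin.last m)
    simp only [Fin.val_last] at this
    simp only [Finset.mem_coe, mem_range]
    omega

open Finset in
lemma card_eq_Dnum (n : ℕ) : ∀ m c : ℕ, (Fs n m c).card = Dnum n m c := by
  intro m
  induction m using Nat.strong_induction_on with
  | _ m ih =>
    intro c
    match m with
    | 0 => rw [Fs_zero]; simp [Dnum]
    | (m+1) =>
      rw [card_rec, Dnum]
      apply Finset.sum_congr rfl
      intro t ht
      simp only [mem_range] at ht
      by_cases htm : t+1 ≤ m+1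
      · rw [if_pos htm, if_pos htm, ih (m-t) (by omega) c]
        congr 1
        have h1 : (Fs n t 0).card = Dnum n t 0 := ih t (by omega) 0
        have h2 : (Dnum n t 0 : ℚ) = (catalan t : ℚ) := by
          rw [Dnum_unsat t 0 n (by omega), gc_catalan, cat_cast]
        have h3 : Dnum n t 0 = catalan t := by exact_mod_cast h2
        rw [h1, h3]
      · rw [if_neg htm, if_neg htm, ih m (by omega) (t-m)]

theorem stmt17 (k : ℕ) :
    (∀ n : ℕ, k + 1 ≤ n →
      ct (fun m => if m < k then 0 else cat (m - k)) n
        = ({u : Fin (n - k) → ℕ | (∀ i, 1 ≤ u i ∧ u i ≤ n) ∧ Cond u}.ncard : ℚ)) ∧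
    (∀ m : ℕ, m + 1 ≤ k → ct (fun m => if m < k then 0 else cat (m - k)) m = 0) ∧
    ct (fun m => if m < k then 0 else cat (m - k)) k = 1 := by
  refine ⟨?_, fun m hm => ct_lt k m hm, ct_self k⟩
  intro n hn
  have h1 : ct (fun m => if m < k then 0 else cat (m - k)) n = (Dnum n (n-k) n : ℚ) :=
    (Dnum_sat (n-k) k n (by omega) (by omega)).symm
  rw [h1]
  have h2 : {u : Fin (n-k) → ℕ | (∀ i, 1 ≤ u i ∧ u i ≤ n) ∧ Cond u} = ↑(Fs n (n-k) n) := by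
    ext u
    simp only [Set.mem_setOf_eq, Finset.mem_coe, mem_Fs]
    constructor
    · rintro ⟨hcap, hcond⟩
      exact ⟨fun i => ⟨(hcap i).1, by have := (hcap i).2; have := i.isLt; omega⟩, hcond⟩
    · rintro ⟨hcap, hcond⟩
      exact ⟨fun i => ⟨(hcap i).1, by have := (hcap i).2; have := i.isLt; omega⟩, hcond⟩
  rw [h2, Set.ncard_coe_finset, card_eq_Dnum]
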